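/- Let N be an isolating neighbourhood whose maximal invariant set K is the disjoint union of two compact sets K₀ and K₁. Then N⁺ = {p ∈ N : φ(p,[0,∞)) ⊆ N} decomposes as the disjoint union of two compact positively invariant sets N₀⁺ and N₁⁺, where N_i⁺ consists exactly of the points of N⁺ whose ω-limit set is contained in K_i. -/

import Mathlib

open Set

open Set Metric Filter Topology

namespace Stmt10Aux

variable {X : Type*} [MetricSpace X]

def om (φ : ℝ → X → X) (p : X) : Set X :=
  ⋂ t ∈ Ici (0:ℝ), closure {x | ∃ s : ℝ, t ≤ s ∧ x = φ s p}

def Np (φ : ℝ → X → X) (N : Set X) : Set X :=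
  {p ∈ N | ∀ t : ℝ, 0 ≤ t → φ t p ∈ N}

theorem mem_om {φ : ℝ → X → X} {p x : X} :
    x ∈ om φ p ↔ ∀ t : ℝ, 0 ≤ t → x ∈ closure {y | ∃ s : ℝ, t ≤ s ∧ y = φ s p} := by
  simp [om, mem_Ici]

theorem cont_t {φ : ℝ → X → X} (hc : Continuous fun q : ℝ × X => φ q.1 q.2) (t : ℝ) :
    Continuous (φ t) := hc.comp (continuous_const.prodMk continuous_id)

theorem cont_p {φ : ℝ → X → X} (hc : Continuous fun q : ℝ × X => φ q.1 q.2) (p : X) :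
    Continuous fun t => φ t p := hc.comp (continuous_id.prodMk continuous_const)

theorem mem_om_of_tendsto {φ : ℝ → X → X} {p x : X} {s : ℕ → ℝ}
    (hs : Tendsto s atTop atTop)
    (hx : Tendsto (fun n => φ (s n) p) atTop (𝓝 x)) : x ∈ om φ p := by
  rw [mem_om]
  intro t ht
  refine mem_closure_of_tendsto hx ?_
  filter_upwards [hs.eventually_ge_atTop t] with n hn
  exact ⟨s n, hn, rfl⟩

theorem om_subset_N {φ : ℝ → X → X} {N : Set X} {p : X} (hN : IsClosed N)
    (hp : p ∈ Np φ N) : om φ p ⊆ N := by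
  intro x hx
  have h0 := mem_om.mp hx 0 le_rfl
  exact closure_minimal (by rintro y ⟨s, hs, rfl⟩; exact hp.2 s hs) hN h0

theorem om_nonempty {φ : ℝ → X → X} {N : Set X} {p : X}
    (hN : IsCompact N) (hp : p ∈ Np φ N) : (om φ p).Nonempty := by
  haveI : Nonempty (Ici (0:ℝ)) := ⟨⟨0, self_mem_Ici⟩⟩
  have h : om φ p = ⋂ t : Ici (0:ℝ), closure {x | ∃ s : ℝ, (t:ℝ) ≤ s ∧ x = φ s p} := by
    rw [om, biInter_eq_iInter]
  rw [h]
  have hsubN : ∀ t : Ici (0:ℝ),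
      closure {x | ∃ s : ℝ, (t:ℝ) ≤ s ∧ x = φ s p} ⊆ N := by
    rintro t y hy
    refine closure_minimal ?_ hN.isClosed hy
    rintro z ⟨s, hs, rfl⟩
    exact hp.2 s (le_trans t.2 hs)
  apply IsCompact.nonempty_iInter_of_directed_nonempty_isCompact_isClosed
  · intro a b
    refine ⟨⟨max (a:ℝ) b, mem_Ici.2 (le_trans a.2 (le_max_left _ _))⟩, ?_, ?_⟩
    · apply closure_mono; rintro y ⟨s, hs, rfl⟩
      exact ⟨s, le_trans (le_max_left _ _) hs, rfl⟩
    · apply closure_mono; rintro y ⟨s, hs, rfl⟩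
      exact ⟨s, le_trans (le_max_right _ _) hs, rfl⟩
  · exact fun t => ⟨φ (t:ℝ) p, subset_closure ⟨(t:ℝ), le_rfl, rfl⟩⟩
  · exact fun t => hN.of_isClosed_subset isClosed_closure (hsubN t)
  · exact fun t => isClosed_closure

theorem om_inv {φ : ℝ → X → X} {p x : X}
    (hc : Continuous fun q : ℝ × X => φ q.1 q.2)
    (hadd : ∀ s t p, φ (s + t) p = φ s (φ t p))
    (hx : x ∈ om φ p) (t : ℝ) : φ t x ∈ om φ p := by
  have hseq : ∀ n : ℕ, ∃ s : ℝ, (n:ℝ) ≤ s ∧ dist x (φ s p) < 1/(n+1) := by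
    intro n
    have h := mem_om.mp hx n (Nat.cast_nonneg n)
    rw [Metric.mem_closure_iff] at h
    obtain ⟨y, ⟨s, hs, rfl⟩, hd⟩ := h (1/(n+1)) (by positivity)
    exact ⟨s, hs, hd⟩
  choose s hs hd using hseq
  have hstop : Tendsto s atTop atTop :=
    tendsto_atTop_mono hs tendsto_natCast_atTop_atTop
  have hconv : Tendsto (fun n => φ (s n) p) atTop (𝓝 x) := by
    rw [tendsto_iff_dist_tendsto_zero]
    refine squeeze_zero (fun n => dist_nonneg) (fun n => ?_)
      tendsto_one_div_add_atTop_nhds_zero_nat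
    rw [dist_comm]; exact (hd n).le
  have hconv2 : Tendsto (fun n => φ (t + s n) p) atTop (𝓝 (φ t x)) := by
    have h2 := ((cont_t hc t).tendsto x).comp hconv
    simpa [hadd, Function.comp_def] using h2
  exact mem_om_of_tendsto (tendsto_atTop_add_const_left _ t hstop) hconv2

theorem om_in_K {φ : ℝ → X → X} {N K0 K1 : Set X} {p : X}
    (hN : IsCompact N)
    (hc : Continuous fun q : ℝ × X => φ q.1 q.2)
    (hadd : ∀ s t p, φ (s + t) p = φ s (φ t p))
    (hK : {p ∈ N | ∀ t : ℝ, φ t p ∈ N} = K0 ∪ K1)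
    (hp : p ∈ Np φ N) : om φ p ⊆ K0 ∪ K1 := by
  intro x hx
  rw [← hK]
  exact ⟨om_subset_N hN.isClosed hp hx,
    fun t => om_subset_N hN.isClosed hp (om_inv hc hadd hx t)⟩

theorem orbit_in_K {φ : ℝ → X → X} {N K0 K1 : Set X}
    (hadd : ∀ s t p, φ (s + t) p = φ s (φ t p))
    (hK : {p ∈ N | ∀ t : ℝ, φ t p ∈ N} = K0 ∪ K1)
    {r : X} (hr : ∀ t : ℝ, φ t r ∈ N) : ∀ t : ℝ, φ t r ∈ K0 ∪ K1 := by
  intro t; rw [← hK]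
  exact ⟨hr t, fun s => by rw [← hadd]; exact hr _⟩

theorem om_freq {φ : ℝ → X → X} {p x : X} (hx : x ∈ om φ p) {U : Set X}
    (hU : IsOpen U) (hxU : x ∈ U) (T : ℝ) :
    ∃ s : ℝ, T ≤ s ∧ 0 ≤ s ∧ φ s p ∈ U := by
  have h := mem_om.mp hx (max T 0) (le_max_right _ _)
  rw [_root_.mem_closure_iff] at h
  obtain ⟨y, hyU, ⟨s, hs, rfl⟩⟩ := h U hU hxU
  exact ⟨s, le_trans (le_max_left _ _) hs, le_trans (le_max_right _ _) hs, hyU⟩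

theorem om_escape {φ : ℝ → X → X} {N : Set X} {p : X} (hN : IsCompact N)
    (hp : p ∈ Np φ N) {C : Set X} (hC : IsClosed C)
    (hdis : ∀ x ∈ om φ p, x ∉ C) : ∃ T : ℝ, ∀ s, T ≤ s → φ s p ∉ C := by
  by_contra h
  push_neg at h
  have h' : ∀ n : ℕ, ∃ s : ℝ, (n:ℝ) ≤ s ∧ φ s p ∈ C := fun n => h n
  choose s hs hsc using h'
  have hmem : ∀ n, φ (s n) p ∈ N := fun n => hp.2 _ (le_trans (Nat.cast_nonneg n) (hs n))
  obtain ⟨x, hxN, ψ, hψ, hlim⟩ := hN.tendsto_subseq hmem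
  have hxom : x ∈ om φ p := by
    refine mem_om_of_tendsto (s := fun k => s (ψ k)) ?_ hlim
    exact tendsto_atTop_mono
      (fun k => le_trans (Nat.cast_le.2 hψ.le_apply) (hs (ψ k))) tendsto_natCast_atTop_atTop
  exact hdis x hxom (hC.mem_of_tendsto hlim (Eventually.of_forall fun k => hsc (ψ k)))

theorem om_shift {φ : ℝ → X → X} {p : X}
    (hadd : ∀ s t p, φ (s + t) p = φ s (φ t p))
    {t : ℝ} (ht : 0 ≤ t) : om φ (φ t p) ⊆ om φ p := by
  intro x hx
  rw [mem_om] at hx ⊢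
  intro u hu
  refine closure_mono ?_ (hx u hu)
  rintro y ⟨s, hs, rfl⟩
  exact ⟨s + t, by linarith, (hadd s t p).symm⟩

theorem Np_closed {φ : ℝ → X → X} {N : Set X}
    (hc : Continuous fun q : ℝ × X => φ q.1 q.2)
    (hN : IsCompact N) : IsClosed (Np φ N) := by
  have h : Np φ N = N ∩ ⋂ t ∈ Ici (0:ℝ), φ t ⁻¹' N := by
    ext p; simp [Np, mem_Ici]
  rw [h]
  exact hN.isClosed.inter (isClosed_biInter fun t _ => hN.isClosed.preimage (cont_t hc t))

theorem Np_inv {φ : ℝ → X → X} {N : Set X} {p : X}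
    (hadd : ∀ s t p, φ (s + t) p = φ s (φ t p))
    (hp : p ∈ Np φ N) {t : ℝ} (ht : 0 ≤ t) : φ t p ∈ Np φ N :=
  ⟨hp.2 t ht, fun s hs => by rw [← hadd]; exact hp.2 _ (by linarith)⟩


theorem crossing {φ : ℝ → X → X} {N A B : Set X}
    (hc : Continuous fun q : ℝ × X => φ q.1 q.2)
    (hzero : ∀ p, φ 0 p = p) (hadd : ∀ s t p, φ (s + t) p = φ s (φ t p))
    (hN : IsCompact N) (hK : {p ∈ N | ∀ t : ℝ, φ t p ∈ N} = A ∪ B)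
    {ε : ℝ} (hε : 0 < ε) (hdT : Disjoint (thickening ε A) (thickening ε B))
    (H : ∀ n : ℕ, ∃ (r : X) (σ bb : ℝ),
      r ∈ cthickening (ε/2) B ∧
      (∀ s, 0 ≤ s → φ s r ∈ N) ∧
      (∀ u, 0 ≤ u → u ≤ σ → φ (-u) r ∈ N) ∧
      (n:ℝ) ≤ σ ∧ 0 ≤ bb ∧
      φ bb r ∈ cthickening (ε/2) A ∧
      (∀ s, 0 < s → s ≤ bb → φ s r ∉ cthickening (ε/2) B)) : False := by
  choose r σ b hr1 hrf hrb hσ hb0 hbC0 hbav using H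
  have hCB : cthickening (ε/2) B ⊆ thickening ε B :=
    cthickening_subset_thickening' hε (by linarith) B
  have hCA : cthickening (ε/2) A ⊆ thickening ε A :=
    cthickening_subset_thickening' hε (by linarith) A
  have hrN : ∀ n, r n ∈ N := fun n => by simpa [hzero] using hrf n 0 le_rfl
  obtain ⟨R, hRN, ψ, hψ, hlim⟩ := hN.tendsto_subseq hrN
  have hRC1 : R ∈ cthickening (ε/2) B :=
    isClosed_cthickening.mem_of_tendsto hlim (Eventually.of_forall fun k => hr1 _)
  have hRfull : ∀ t : ℝ, φ t R ∈ N := by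
    intro t
    have hlim' : Tendsto (fun k => φ t (r (ψ k))) atTop (𝓝 (φ t R)) :=
      ((cont_t hc t).tendsto R).comp hlim
    rcases le_or_gt 0 t with ht | ht
    · exact hN.isClosed.mem_of_tendsto hlim' (Eventually.of_forall fun k => hrf _ t ht)
    · refine hN.isClosed.mem_of_tendsto hlim' ?_
      filter_upwards [eventually_ge_atTop ⌈-t⌉₊] with k hk
      have h1 : -t ≤ (k:ℝ) := le_trans (Nat.le_ceil _) (Nat.cast_le.2 hk)
      have h2 : (k:ℝ) ≤ σ (ψ k) := le_trans (Nat.cast_le.2 hψ.le_apply) (hσ (ψ k))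
      have h3 := hrb (ψ k) (-t) (by linarith) (by linarith)
      simpa using h3
  have horbK : ∀ t, φ t R ∈ A ∪ B := orbit_in_K hadd hK hRfull
  have hRB : R ∈ B := by
    have hR0 : R ∈ A ∪ B := by have := horbK 0; rwa [hzero] at this
    rcases hR0 with h | h
    · exact absurd (self_subset_thickening hε A h) (disjoint_right.mp hdT (hCB hRC1))
    · exact h
  have hOT1 : ∀ t : ℝ, φ t R ∈ thickening ε B := by
    have hconn : IsPreconnected (range fun t : ℝ => φ t R) :=
      (isConnected_range (cont_p hc R)).isPreconnected
    have hsub : (range fun t : ℝ => φ t R) ⊆ thickening ε A ∪ thickening ε B := by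
      rintro y ⟨t, rfl⟩
      rcases horbK t with h | h
      · exact Or.inl (self_subset_thickening hε A h)
      · exact Or.inr (self_subset_thickening hε B h)
    rcases hconn.subset_or_subset isOpen_thickening isOpen_thickening hdT hsub with h | h
    · exfalso
      have hRmem : R ∈ thickening ε A := h ⟨0, hzero R⟩
      exact disjoint_left.mp hdT hRmem (self_subset_thickening hε B hRB)
    · exact fun t => h ⟨t, rfl⟩
  have hOB : ∀ t : ℝ, φ t R ∈ B := fun t =>
    (horbK t).resolve_left fun hA =>
      disjoint_left.mp hdT (self_subset_thickening hε A hA) (hOT1 t)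
  by_cases hfb : ∃ᶠ k in atTop, b (ψ k) ≤ 1
  · obtain ⟨θ, hθ, hθb⟩ := extraction_of_frequently_atTop hfb
    have hmem : ∀ j, b (ψ (θ j)) ∈ Icc (0:ℝ) 1 := fun j => ⟨hb0 _, hθb j⟩
    obtain ⟨δ, hδI, θ2, hθ2, hδlim⟩ := isCompact_Icc.tendsto_subseq hmem
    have hrlim : Tendsto (fun j => r (ψ (θ (θ2 j)))) atTop (𝓝 R) :=
      hlim.comp ((hθ.comp hθ2).tendsto_atTop)
    have hphilim : Tendsto (fun j => φ (b (ψ (θ (θ2 j)))) (r (ψ (θ (θ2 j))))) atTop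
        (𝓝 (φ δ R)) := by
      have hp2 : Tendsto (fun j => ((b (ψ (θ (θ2 j)))), r (ψ (θ (θ2 j))))) atTop
          (𝓝 (δ, R)) := Tendsto.prodMk_nhds hδlim hrlim
      exact (hc.tendsto (δ, R)).comp hp2
    have hmemC0 : φ δ R ∈ cthickening (ε/2) A :=
      isClosed_cthickening.mem_of_tendsto hphilim (Eventually.of_forall fun j => hbC0 _)
    exact disjoint_left.mp hdT (hCA hmemC0) (self_subset_thickening hε B (hOB δ))
  · rw [Filter.not_frequently] at hfb
    have hlim1 : Tendsto (fun k => φ 1 (r (ψ k))) atTop (𝓝 (φ 1 R)) :=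
      ((cont_t hc 1).tendsto R).comp hlim
    have hdist : Tendsto (fun k => dist (φ 1 (r (ψ k))) (φ 1 R)) atTop (𝓝 0) :=
      tendsto_iff_dist_tendsto_zero.mp hlim1
    have hev : ∀ᶠ k in atTop, dist (φ 1 (r (ψ k))) (φ 1 R) < ε/2 :=
      hdist.eventually (gt_mem_nhds (by linarith))
    obtain ⟨k, hk1, hk2⟩ := (hfb.and hev).exists
    have hmemB : φ 1 (r (ψ k)) ∈ cthickening (ε/2) B :=
      mem_cthickening_of_dist_le _ _ _ _ (hOB 1) hk2.le
    exact hbav (ψ k) 1 one_pos (by linarith [not_le.mp hk1]) hmemB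


theorem cover {φ : ℝ → X → X} {N A B : Set X}
    (hc : Continuous fun q : ℝ × X => φ q.1 q.2)
    (hzero : ∀ p, φ 0 p = p) (hadd : ∀ s t p, φ (s + t) p = φ s (φ t p))
    (hN : IsCompact N) (hK : {p ∈ N | ∀ t : ℝ, φ t p ∈ N} = A ∪ B)
    {ε : ℝ} (hε : 0 < ε) (hdT : Disjoint (thickening ε A) (thickening ε B))
    {p : X} (hp : p ∈ Np φ N) (hnA : ¬ om φ p ⊆ A) (hnB : ¬ om φ p ⊆ B) : False := by
  obtain ⟨x0, hx0om, hx0n⟩ := not_subset.mp hnB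
  have hx0A : x0 ∈ A := (om_in_K hN hc hadd hK hp hx0om).resolve_right hx0n
  obtain ⟨x1, hx1om, hx1n⟩ := not_subset.mp hnA
  have hx1B : x1 ∈ B := (om_in_K hN hc hadd hK hp hx1om).resolve_left hx1n
  have hε2 : (0:ℝ) < ε/2 := by linarith
  refine crossing hc hzero hadd hN hK hε hdT (fun n => ?_)
  obtain ⟨c, hc1, hc2, hc3⟩ := om_freq hx1om isOpen_thickening
    (self_subset_thickening hε2 B hx1B) n
  obtain ⟨a, ha1, ha2, ha3⟩ := om_freq hx0om isOpen_thickening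
    (self_subset_thickening hε2 A hx0A) c
  set S := {u : ℝ | u ∈ Icc 0 a ∧ φ u p ∈ cthickening (ε/2) B} with hS
  have hScl : IsClosed S :=
    (isClosed_Icc).inter (isClosed_cthickening.preimage (cont_p hc p))
  have hScomp : IsCompact S := isCompact_Icc.of_isClosed_subset hScl fun u hu => hu.1
  have hSne : S.Nonempty := ⟨c, ⟨hc2, ha1⟩, thickening_subset_cthickening _ _ hc3⟩
  have hsS : sSup S ∈ S := hScomp.sSup_mem hSne
  set s := sSup S with hsdef
  have hcs : c ≤ s := le_csSup hScomp.bddAbove ⟨⟨hc2, ha1⟩, thickening_subset_cthickening _ _ hc3⟩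
  have hmax : ∀ u, s < u → u ≤ a → φ u p ∉ cthickening (ε/2) B := by
    intro u hu1 hu2 hmem
    have : u ∈ S := ⟨⟨by linarith [hsS.1.1], hu2⟩, hmem⟩
    exact absurd (le_csSup hScomp.bddAbove this) (not_le.mpr hu1)
  refine ⟨φ s p, s, a - s, hsS.2, ?_, ?_, le_trans hc1 hcs, by linarith [hsS.1.2], ?_, ?_⟩
  · intro u hu
    rw [← hadd]
    exact hp.2 _ (by linarith [hsS.1.1])
  · intro u hu1 hu2
    rw [← hadd]
    exact hp.2 _ (by linarith)
  · rw [← hadd, sub_add_cancel]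
    exact thickening_subset_cthickening _ _ ha3
  · intro u hu1 hu2
    rw [← hadd]
    exact hmax _ (by linarith) (by linarith)

theorem notlim {φ : ℝ → X → X} {N A B : Set X}
    (hc : Continuous fun q : ℝ × X => φ q.1 q.2)
    (hzero : ∀ p, φ 0 p = p) (hadd : ∀ s t p, φ (s + t) p = φ s (φ t p))
    (hN : IsCompact N) (hK : {p ∈ N | ∀ t : ℝ, φ t p ∈ N} = A ∪ B)
    {ε : ℝ} (hε : 0 < ε) (hdT : Disjoint (thickening ε A) (thickening ε B))
    {p : X} (hp : p ∈ Np φ N) (hpB : om φ p ⊆ B)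
    {pk : ℕ → X} (hpk : ∀ k, pk k ∈ Np φ N) (hpkA : ∀ k, om φ (pk k) ⊆ A)
    (hconv : Tendsto pk atTop (𝓝 p)) : False := by
  obtain ⟨x1, hx1om⟩ := om_nonempty hN hp
  have hx1B : x1 ∈ B := hpB hx1om
  have hε2 : (0:ℝ) < ε/2 := by linarith
  have hACB : ∀ y ∈ cthickening (ε/2) B, y ∉ A := fun y hy hyA =>
    disjoint_left.mp hdT (self_subset_thickening hε A hyA)
      (cthickening_subset_thickening' hε (by linarith) B hy)
  refine crossing hc hzero hadd hN hK hε hdT (fun n => ?_)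
  obtain ⟨T, hT1, hT2, hT3⟩ := om_freq hx1om isOpen_thickening
    (self_subset_thickening hε2 B hx1B) n
  have htend : Tendsto (fun k => φ T (pk k)) atTop (𝓝 (φ T p)) :=
    ((cont_t hc T).tendsto p).comp hconv
  obtain ⟨k, hk⟩ := (htend.eventually (isOpen_thickening.eventually_mem hT3)).exists
  set q := φ T (pk k) with hqdef
  have hq : q ∈ Np φ N := Np_inv hadd (hpk k) hT2
  have homq : om φ q ⊆ A := (om_shift hadd hT2).trans (hpkA k)
  obtain ⟨E, hE⟩ := om_escape hN hq isClosed_cthickening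
    (fun x hx hxC => hACB x hxC (homq hx))
  obtain ⟨x0, hx0⟩ := om_nonempty hN hq
  obtain ⟨bb, hbb1, hbb2, hbb3⟩ := om_freq hx0 isOpen_thickening
    (self_subset_thickening hε2 A (homq hx0)) E
  set S := {u : ℝ | u ∈ Icc 0 bb ∧ φ u q ∈ cthickening (ε/2) B} with hS
  have hScl : IsClosed S :=
    (isClosed_Icc).inter (isClosed_cthickening.preimage (cont_p hc q))
  have hScomp : IsCompact S := isCompact_Icc.of_isClosed_subset hScl fun u hu => hu.1
  have h0S : (0:ℝ) ∈ S := by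
    refine ⟨⟨le_rfl, hbb2⟩, ?_⟩
    rw [hzero]
    exact thickening_subset_cthickening _ _ hk
  have hsS : sSup S ∈ S := hScomp.sSup_mem ⟨0, h0S⟩
  set s := sSup S with hsdef
  have hmax : ∀ u, s < u → u ≤ bb → φ u q ∉ cthickening (ε/2) B := by
    intro u hu1 hu2 hmem
    have : u ∈ S := ⟨⟨by linarith [hsS.1.1], hu2⟩, hmem⟩
    exact absurd (le_csSup hScomp.bddAbove this) (not_le.mpr hu1)
  refine ⟨φ s q, s + T, bb - s, hsS.2, ?_, ?_, by linarith [hsS.1.1], by linarith [hsS.1.2], ?_, ?_⟩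
  · intro u hu
    rw [← hadd]
    exact hq.2 _ (by linarith [hsS.1.1])
  · intro u hu1 hu2
    rw [hqdef, ← hadd, ← hadd]
    exact (hpk k).2 _ (by linarith)
  · rw [← hadd, sub_add_cancel]
    exact thickening_subset_cthickening _ _ hbb3
  · intro u hu1 hu2
    rw [← hadd]
    exact hmax _ (by linarith) (by linarith)

end Stmt10Aux

open Stmt10Aux

/-- If the maximal invariant set of an isolating neighbourhood `N` is the disjoint
union of compacta `K₀` and `K₁`, then `N⁺` is the disjoint union of two compact
positively invariant sets `N₀⁺`, `N₁⁺`, where `Nᵢ⁺` consists of the points of `N⁺`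
whose ω-limit set is contained in `Kᵢ`. -/
theorem stmt10 {X : Type*} [MetricSpace X]
    (φ : ℝ → X → X)
    (hφcont : Continuous fun q : ℝ × X => φ q.1 q.2)
    (hφzero : ∀ p, φ 0 p = p)
    (hφadd : ∀ s t p, φ (s + t) p = φ s (φ t p))
    (N K0 K1 : Set X) (hN : IsCompact N)
    (hiso : ∀ p ∈ frontier N, ¬ ∀ t : ℝ, φ t p ∈ N)
    (hK0 : IsCompact K0) (hK1 : IsCompact K1) (hdisj : Disjoint K0 K1)
    (hK : {p ∈ N | ∀ t : ℝ, φ t p ∈ N} = K0 ∪ K1) :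
    ∃ N0 N1 : Set X,
      IsCompact N0 ∧ IsCompact N1 ∧
      (∀ t : ℝ, 0 ≤ t → φ t '' N0 ⊆ N0) ∧ (∀ t : ℝ, 0 ≤ t → φ t '' N1 ⊆ N1) ∧
      Disjoint N0 N1 ∧
      N0 ∪ N1 = {p ∈ N | ∀ t : ℝ, 0 ≤ t → φ t p ∈ N} ∧
      N0 = {p ∈ N | (∀ t : ℝ, 0 ≤ t → φ t p ∈ N) ∧
        (⋂ t ∈ Ici (0:ℝ), closure {x | ∃ s : ℝ, t ≤ s ∧ x = φ s p}) ⊆ K0} ∧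
      N1 = {p ∈ N | (∀ t : ℝ, 0 ≤ t → φ t p ∈ N) ∧
        (⋂ t ∈ Ici (0:ℝ), closure {x | ∃ s : ℝ, t ≤ s ∧ x = φ s p}) ⊆ K1} := by
  obtain ⟨ε, hε, hdT⟩ := hdisj.exists_thickenings hK0 hK1.isClosed
  have hK' : {p ∈ N | ∀ t : ℝ, φ t p ∈ N} = K1 ∪ K0 := hK.trans (union_comm _ _)
  set M0 : Set X := {p | p ∈ Np φ N ∧ om φ p ⊆ K0} with hM0
  set M1 : Set X := {p | p ∈ Np φ N ∧ om φ p ⊆ K1} with hM1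
  have hcov : ∀ p ∈ Np φ N, om φ p ⊆ K0 ∨ om φ p ⊆ K1 := by
    intro p hp
    by_cases h0 : om φ p ⊆ K0
    · exact Or.inl h0
    by_cases h1 : om φ p ⊆ K1
    · exact Or.inr h1
    exact absurd (cover hφcont hφzero hφadd hN hK hε hdT hp h0 h1) not_false
  have hM0cl : IsClosed M0 := by
    refine IsSeqClosed.isClosed ?_
    intro pk p hmem hconv
    have hpNp : p ∈ Np φ N :=
      (Np_closed hφcont hN).mem_of_tendsto hconv (Eventually.of_forall fun k => (hmem k).1)
    refine ⟨hpNp, ?_⟩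
    rcases hcov p hpNp with h | h
    · exact h
    · exact absurd (notlim hφcont hφzero hφadd hN hK hε hdT hpNp h
        (fun k => (hmem k).1) (fun k => (hmem k).2) hconv) not_false
  have hM1cl : IsClosed M1 := by
    refine IsSeqClosed.isClosed ?_
    intro pk p hmem hconv
    have hpNp : p ∈ Np φ N :=
      (Np_closed hφcont hN).mem_of_tendsto hconv (Eventually.of_forall fun k => (hmem k).1)
    refine ⟨hpNp, ?_⟩
    rcases hcov p hpNp with h | h
    · exact absurd (notlim hφcont hφzero hφadd hN hK' hε hdT.symm hpNp h
        (fun k => (hmem k).1) (fun k => (hmem k).2) hconv) not_false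
    · exact h
  refine ⟨M0, M1, ?_, ?_, ?_, ?_, ?_, ?_, ?_, ?_⟩
  · exact hN.of_isClosed_subset hM0cl fun p hp => hp.1.1
  · exact hN.of_isClosed_subset hM1cl fun p hp => hp.1.1
  · rintro t ht x ⟨q, hq, rfl⟩
    exact ⟨Np_inv hφadd hq.1 ht, (om_shift hφadd ht).trans hq.2⟩
  · rintro t ht x ⟨q, hq, rfl⟩
    exact ⟨Np_inv hφadd hq.1 ht, (om_shift hφadd ht).trans hq.2⟩
  · rw [Set.disjoint_left]
    rintro p ⟨hp1, hp2⟩ ⟨hq1, hq2⟩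
    obtain ⟨x, hx⟩ := om_nonempty hN hp1
    exact Set.disjoint_left.mp hdisj (hp2 hx) (hq2 hx)
  · ext p
    constructor
    · rintro (⟨h1, _⟩ | ⟨h1, _⟩) <;> exact h1
    · intro hp
      rcases hcov p hp with h | h
      · exact Or.inl ⟨hp, h⟩
      · exact Or.inr ⟨hp, h⟩
  · ext p
    exact ⟨fun ⟨⟨a, b⟩, c⟩ => ⟨a, b, c⟩, fun ⟨a, b, c⟩ => ⟨⟨a, b⟩, c⟩⟩
  · ext p
    exact ⟨fun ⟨⟨a, b⟩, c⟩ => ⟨a, b, c⟩, fun ⟨a, b, c⟩ => ⟨⟨a, b⟩, c⟩⟩
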